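/- If m ≥ 1 is an integer such that both 5·10^m - 1 and 5·10^m - 3 are prime, then p = 5·10^m - 1 is a v-palindrome: 10 ∤ p, p ≠ r(p), and v(p) = v(r(p)). -/
import Mathlib


def r (n : ℕ) : ℕ := Nat.ofDigits 10 ((Nat.digits 10 n).reverse)

def v (n : ℕ) : ℤ :=
  ∑ p ∈ n.primeFactors,
    ((p : ℤ) + if 2 ≤ n.factorization p then (n.factorization p : ℤ) else 0)

lemma digits_p (m : ℕ) : Nat.digits 10 (5 * 10 ^ m - 1) = List.replicate m 9 ++ [4] := by
  induction m with
  | zero => simp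
  | succ n ih =>
    have h1 : (1:ℕ) ≤ 10 ^ n := Nat.one_le_pow _ _ (by norm_num)
    have h : 5 * 10 ^ (n+1) - 1 = 9 + 10 * (5 * 10 ^ n - 1) := by
      rw [pow_succ]; omega
    rw [h, Nat.digits_def' (by norm_num : 1 < 10) (by omega)]
    have h2 : (9 + 10 * (5 * 10 ^ n - 1)) % 10 = 9 := by omega
    have h3 : (9 + 10 * (5 * 10 ^ n - 1)) / 10 = 5 * 10 ^ n - 1 := by omega
    rw [h2, h3, ih, List.replicate_succ]
    rfl

lemma ofDigits_rep (m : ℕ) : Nat.ofDigits 10 (List.replicate m 9) = 10 ^ m - 1 := by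
  induction m with
  | zero => simp
  | succ n ih =>
    have h1 : (1:ℕ) ≤ 10 ^ n := Nat.one_le_pow _ _ (by norm_num)
    rw [List.replicate_succ, Nat.ofDigits_cons, ih, pow_succ]
    push_cast
    omega

lemma r_p (m : ℕ) : r (5 * 10 ^ m - 1) = 10 ^ (m+1) - 6 := by
  have h1 : (1:ℕ) ≤ 10 ^ m := Nat.one_le_pow _ _ (by norm_num)
  unfold r
  rw [digits_p, List.reverse_append, List.reverse_replicate]
  simp only [List.reverse_cons, List.reverse_nil, List.nil_append, List.singleton_append,
    Nat.ofDigits_cons, ofDigits_rep]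
  push_cast
  rw [pow_succ]
  omega

lemma v_prime {p : ℕ} (hp : p.Prime) : v p = p := by
  unfold v
  rw [hp.primeFactors, Finset.sum_singleton, hp.factorization_self]
  norm_num

lemma v_two_mul {q : ℕ} (hq : q.Prime) (h2 : q ≠ 2) : v (2 * q) = 2 + q := by
  unfold v
  have hq0 : q ≠ 0 := hq.ne_zero
  have hpf : (2 * q).primeFactors = {2, q} := by
    rw [Nat.primeFactors_mul (by norm_num) hq0, Nat.Prime.primeFactors Nat.prime_two,
      hq.primeFactors]
    rfl
  have hfac : (2 * q).factorization = (Nat.factorization 2) + (Nat.factorization q) :=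
    Nat.factorization_mul (by norm_num) hq0
  rw [hpf, Finset.sum_pair (Ne.symm h2)]
  rw [hfac]
  simp only [Finsupp.add_apply, Nat.Prime.factorization_self Nat.prime_two,
    hq.factorization_self]
  have ha : (Nat.factorization q) 2 = 0 := by
    rw [Nat.factorization_eq_zero_iff]
    right; left
    intro h
    exact h2 ((Nat.prime_dvd_prime_iff_eq Nat.prime_two hq).mp h).symm
  have hb : (Nat.factorization 2) q = 0 := by
    rw [Nat.factorization_eq_zero_iff]
    right; left
    intro h
    have := Nat.le_of_dvd (by norm_num) h
    have := hq.two_le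
    exact h2 (by omega)
  rw [ha, hb]
  norm_num

theorem stmt_12 (m : ℕ) (hm : 1 ≤ m) (hp : (5 * 10 ^ m - 1).Prime)
    (hp2 : (5 * 10 ^ m - 3).Prime) :
    ¬ 10 ∣ (5 * 10 ^ m - 1) ∧ (5 * 10 ^ m - 1) ≠ r (5 * 10 ^ m - 1) ∧
      v (5 * 10 ^ m - 1) = v (r (5 * 10 ^ m - 1)) := by
  have h10 : (10:ℕ) ≤ 10 ^ m := by
    calc (10:ℕ) = 10 ^ 1 := (pow_one 10).symm
    _ ≤ 10 ^ m := Nat.pow_le_pow_right (by norm_num) hm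
  have hr : r (5 * 10 ^ m - 1) = 2 * (5 * 10 ^ m - 3) := by
    rw [r_p, pow_succ]; omega
  refine ⟨?_, ?_, ?_⟩
  · intro h
    omega
  · rw [hr]; omega
  · rw [hr, v_prime hp, v_two_mul hp2 (by omega)]
    omega
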